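/- A ring R is a dual self-CS-Baer right R-module if and only if the right R-module R is lifting, if and only if R is semiperfect. -/

import Mathlib

section Defs

variable {R : Type*} [Ring R] {M : Type*} [AddCommGroup M] [Module R M]

/-- `K` is a direct summand of `M`. -/
def IsDirectSummand (K : Submodule R M) : Prop :=
  ∃ K' : Submodule R M, IsCompl K K'

/-- `X` is an essential submodule of `Y`. -/
def EssentialIn (X Y : Submodule R M) : Prop :=
  X ≤ Y ∧ ∀ Z : Submodule R M, Z ≤ Y → X ⊓ Z = ⊥ → Z = ⊥

/-- `K` is a fully invariant submodule of `M`. -/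
def FullyInvariant (K : Submodule R M) : Prop :=
  ∀ f : M →ₗ[R] M, K.map f ≤ K

/-- `L` lies above the direct summand `K`: `K` is a direct summand of `M`, `K ≤ L`
and `L/K` is superfluous (small) in `M/K`. -/
def LiesAbove (L K : Submodule R M) : Prop :=
  IsDirectSummand K ∧ K ≤ L ∧
    ∀ X : Submodule R M, K ≤ X → L ⊔ X = ⊤ → X = ⊤

/-- `lU(X)`: the set of endomorphisms of `M` vanishing on `X`. -/
def lU (X : Submodule R M) : Set (M →ₗ[R] M) :=
  {f : M →ₗ[R] M | X ≤ LinearMap.ker f}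

end Defs

section ModDefs

variable (R : Type*) [Ring R] (M : Type*) [AddCommGroup M] [Module R M]
  (N : Type*) [AddCommGroup N] [Module R N]

/-- `N` is `M`-CS-Rickart. -/
def CSRickart : Prop :=
  ∀ f : M →ₗ[R] N, ∃ K : Submodule R M,
    IsDirectSummand K ∧ EssentialIn (LinearMap.ker f) K

/-- `N` is `M`-CS-Baer. -/
def CSBaer : Prop :=
  ∀ (ι : Type*) (f : ι → (M →ₗ[R] N)), ∃ K : Submodule R M,
    IsDirectSummand K ∧ EssentialIn (⨅ i, LinearMap.ker (f i)) K

/-- `N` is strongly `M`-CS-Baer. -/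
def StrongCSBaer : Prop :=
  ∀ (ι : Type*) (f : ι → (M →ₗ[R] N)), ∃ K : Submodule R M,
    IsDirectSummand K ∧ FullyInvariant K ∧ EssentialIn (⨅ i, LinearMap.ker (f i)) K

/-- `N` is `M`-Baer. -/
def Baer : Prop :=
  ∀ (ι : Type*) (f : ι → (M →ₗ[R] N)),
    IsDirectSummand (⨅ i, LinearMap.ker (f i))

/-- `N` is `M`-𝒦-nonsingular. -/
def KNonsingular : Prop :=
  ∀ f : M →ₗ[R] N, EssentialIn (LinearMap.ker f) (⊤ : Submodule R M) → f = 0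

/-- every direct summand of `M` is fully invariant. -/
def WeakDuo : Prop :=
  ∀ K : Submodule R M, IsDirectSummand K → FullyInvariant K

/-- `M` is extending. -/
def Extending : Prop :=
  ∀ L : Submodule R M, ∃ K : Submodule R M, IsDirectSummand K ∧ EssentialIn L K

/-- `M` is lifting. -/
def Lifting : Prop :=
  ∀ L : Submodule R M, ∃ K : Submodule R M, LiesAbove L K

/-- `M` is dual self-CS-Rickart. -/
def DualSelfCSRickart : Prop :=
  ∀ f : M →ₗ[R] M, ∃ K : Submodule R M, LiesAbove (LinearMap.range f) K

/-- `M` is dual self-CS-Baer. -/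
def DualSelfCSBaer : Prop :=
  ∀ (ι : Type*) (f : ι → (M →ₗ[R] M)), ∃ K : Submodule R M,
    LiesAbove (⨆ i, LinearMap.range (f i)) K

/-- `M` is dual strongly self-CS-Baer. -/
def DualStrongSelfCSBaer : Prop :=
  ∀ (ι : Type*) (f : ι → (M →ₗ[R] M)), ∃ K : Submodule R M,
    FullyInvariant K ∧ LiesAbove (⨆ i, LinearMap.range (f i)) K

/-- `M` is SSIP-extending. -/
def SSIPExtending : Prop :=
  ∀ (ι : Type*) (A : ι → Submodule R M),
    (∀ i, ∃ K : Submodule R M, IsDirectSummand K ∧ EssentialIn (A i) K) →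
    ∃ K : Submodule R M, IsDirectSummand K ∧ EssentialIn (⨅ i, A i) K

/-- `M` is ESSIP. -/
def ESSIP : Prop :=
  ∀ (ι : Type*) (A : ι → Submodule R M), (∀ i, IsDirectSummand (A i)) →
    ∃ K : Submodule R M, IsDirectSummand K ∧ EssentialIn (⨅ i, A i) K

/-- The socle of `M`: the sum of all simple (atomic) submodules. -/
def Socle : Submodule R M := sSup {S : Submodule R M | IsAtom S}

/-- `M` is E-M-𝒦-cononsingular. -/
def ECononsingular : Prop :=
  ∀ X Y : Submodule R M, X ≤ Y → lU X = lU Y → EssentialIn X Y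

/-- `M` is E-M-𝒦-nonsingular. -/
def ENonsingular : Prop :=
  ∀ f : M →ₗ[R] M,
    (∃ K : Submodule R M, IsDirectSummand K ∧ EssentialIn (LinearMap.ker f) K) → f = 0

/-- `M` is nonsingular: the singular submodule vanishes. -/
def Nonsingular : Prop :=
  ∀ x : M, EssentialIn (LinearMap.ker (LinearMap.toSpanSingleton R M x))
      (⊤ : Submodule R R) → x = 0

end ModDefs

/-- `R` is semiperfect: `R/J(R)` is semisimple and idempotents lift modulo `J(R)`. -/
def IsSemiperfectRing (R : Type*) [Ring R] : Prop :=
  IsSemisimpleModule R (R ⧸ Ideal.jacobson (⊥ : Ideal R)) ∧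
    ∀ a : R, a * a - a ∈ Ideal.jacobson (⊥ : Ideal R) →
      ∃ e : R, IsIdempotentElem e ∧ e - a ∈ Ideal.jacobson (⊥ : Ideal R)

/-- `R` is semiregular: every principal (one-sided) ideal of `R` lies above a
direct summand of `R` as a module over itself. -/
def IsSemiregularRing (R : Type*) [Ring R] : Prop :=
  ∀ a : R, ∃ K : Submodule R R, LiesAbove (Submodule.span R {a}) K


section Proofs

variable {R : Type*} [Ring R]

private lemma jac_left_inv {j : R} (hj : j ∈ Ideal.jacobson (⊥ : Ideal R)) :
    ∃ z : R, z * (1 + j) = 1 := by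
  obtain ⟨z, hz⟩ := Ideal.mem_jacobson_iff.1 hj 1
  rw [Ideal.mem_bot] at hz
  refine ⟨z, ?_⟩
  have h1 : z * 1 * j + z = 1 := by rwa [sub_eq_zero] at hz
  calc z * (1 + j) = z * 1 * j + z := by noncomm_ring
  _ = 1 := h1

private lemma jac_isUnit_one_add {j : R} (hj : j ∈ Ideal.jacobson (⊥ : Ideal R)) :
    IsUnit (1 + j) := by
  obtain ⟨z, hz⟩ := jac_left_inv hj
  have hz2 : -(z * j) ∈ Ideal.jacobson (⊥ : Ideal R) := neg_mem (Ideal.mul_mem_left _ z hj)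
  have hzeq : z = 1 + -(z * j) := by
    have h : z + z * j = 1 := by rw [← hz]; noncomm_ring
    rw [← h]; abel
  obtain ⟨w, hw⟩ := jac_left_inv hz2
  have hwz : w * z = 1 := by rw [hzeq]; exact hw
  have hweq : w = 1 + j := by
    calc w = w * (z * (1 + j)) := by rw [hz, mul_one]
    _ = w * z * (1 + j) := by rw [mul_assoc]
    _ = 1 + j := by rw [hwz, one_mul]
  exact ⟨⟨1 + j, z, by rw [← hweq]; exact hwz, hz⟩, rfl⟩

private lemma unit_swap {a b : R} (h : IsUnit (1 - a * b)) : IsUnit (1 - b * a) := by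
  obtain ⟨u, hu⟩ := h
  have hv1 : (1 - a * b) * ↑u⁻¹ = 1 := by rw [← hu]; exact u.mul_inv
  have hv2 : (↑u⁻¹ : R) * (1 - a * b) = 1 := by rw [← hu]; exact u.inv_mul
  refine ⟨⟨1 - b * a, 1 + b * ↑u⁻¹ * a, ?_, ?_⟩, rfl⟩
  · calc (1 - b * a) * (1 + b * ↑u⁻¹ * a)
        = 1 - b * a + b * ((1 - a * b) * ↑u⁻¹) * a := by noncomm_ring
    _ = 1 := by rw [hv1]; noncomm_ring
  · calc (1 + b * ↑u⁻¹ * a) * (1 - b * a)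
        = 1 - b * a + b * (↑u⁻¹ * (1 - a * b)) * a := by noncomm_ring
    _ = 1 := by rw [hv2]; noncomm_ring

private lemma jac_mul_right {j : R} (hj : j ∈ Ideal.jacobson (⊥ : Ideal R)) (r : R) :
    j * r ∈ Ideal.jacobson (⊥ : Ideal R) := by
  rw [Ideal.mem_jacobson_iff]
  intro y
  have h1 : IsUnit (1 - r * -(y * j)) := by
    have hm : r * (y * j) ∈ Ideal.jacobson (⊥ : Ideal R) :=
      Ideal.mul_mem_left _ r (Ideal.mul_mem_left _ y hj)
    have h2 := jac_isUnit_one_add hm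
    have he : 1 - r * -(y * j) = 1 + r * (y * j) := by noncomm_ring
    rwa [he]
  have h2 : IsUnit (1 - -(y * j) * r) := unit_swap h1
  obtain ⟨u, hu⟩ := h2
  refine ⟨↑u⁻¹, ?_⟩
  rw [Ideal.mem_bot]
  have hv : (↑u⁻¹ : R) * (1 - -(y * j) * r) = 1 := by rw [← hu]; exact u.inv_mul
  calc ↑u⁻¹ * y * (j * r) + ↑u⁻¹ - 1
      = ↑u⁻¹ * (1 - -(y * j) * r) - 1 := by noncomm_ring
  _ = 0 := by rw [hv, sub_self]

private lemma small_inf_compl {L K K' : Submodule R R} (hc : IsCompl K K') (hKL : K ≤ L)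
    (hsm : ∀ X : Submodule R R, K ≤ X → L ⊔ X = ⊤ → X = ⊤) :
    L ⊓ K' ≤ Ideal.jacobson (⊥ : Ideal R) := by
  refine le_sInf ?_
  rintro m ⟨-, hm⟩
  by_contra hnot
  have hsup : (L ⊓ K') ⊔ m = ⊤ := hm.1.2 _ (right_lt_sup.2 hnot)
  have hK'eq : K' = (L ⊓ K') ⊔ (m ⊓ K') := by
    calc K' = ((L ⊓ K') ⊔ m) ⊓ K' := by rw [hsup, top_inf_eq]
    _ = (L ⊓ K') ⊔ (m ⊓ K') := sup_inf_assoc_of_le _ inf_le_right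
  have hX : K ⊔ m ⊓ K' = ⊤ := by
    refine hsm _ le_sup_left ?_
    rw [eq_top_iff, ← hc.codisjoint.eq_top]
    refine sup_le ?_ ?_
    · exact le_sup_of_le_right le_sup_left
    · calc K' = (L ⊓ K') ⊔ (m ⊓ K') := hK'eq
      _ ≤ L ⊔ (K ⊔ m ⊓ K') :=
        sup_le (le_sup_of_le_left inf_le_left) (le_sup_of_le_right le_sup_right)
  have hK'm : K' ≤ m := by
    have h2 : K' = m ⊓ K' := by
      calc K' = (K ⊔ m ⊓ K') ⊓ K' := by rw [hX, top_inf_eq]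
      _ = (m ⊓ K' ⊔ K) ⊓ K' := by rw [sup_comm]
      _ = m ⊓ K' ⊔ K ⊓ K' := sup_inf_assoc_of_le _ inf_le_right
      _ = m ⊓ K' := by rw [hc.disjoint.eq_bot, sup_bot_eq]
    exact le_trans h2.le inf_le_left
  exact hnot (le_trans inf_le_right hK'm)

private lemma compl_idem {K K' : Submodule R R} (hc : IsCompl K K') :
    ∃ e e' : R, e ∈ K ∧ e' ∈ K' ∧ e + e' = 1 ∧
      (∀ x ∈ K, x * e = x) ∧ (∀ y ∈ K', y * e = 0) := by
  have h1 : (1 : R) ∈ K ⊔ K' := by rw [hc.codisjoint.eq_top]; trivial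
  obtain ⟨e, he, e', he', hee⟩ := Submodule.mem_sup.1 h1
  have key : ∀ x : R, x * e ∈ K ∧ x * e' ∈ K' ∧ x * e + x * e' = x := fun x =>
    ⟨by rw [← smul_eq_mul]; exact K.smul_mem x he,
     by rw [← smul_eq_mul]; exact K'.smul_mem x he',
     by rw [← mul_add, hee, mul_one]⟩
  refine ⟨e, e', he, he', hee, ?_, ?_⟩
  · intro x hx
    have h2 : x * e' = x - x * e := eq_sub_of_add_eq' (key x).2.2
    have h3 : x * e' ∈ K := h2 ▸ K.sub_mem hx (key x).1
    have h4 : x * e' = 0 := by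
      have h5 : x * e' ∈ K ⊓ K' := Submodule.mem_inf.2 ⟨h3, (key x).2.1⟩
      rw [hc.disjoint.eq_bot] at h5
      exact (Submodule.mem_bot R).1 h5
    have h6 := (key x).2.2
    rw [h4, add_zero] at h6; exact h6
  · intro y hy
    have h2 : y * e = y - y * e' := eq_sub_of_add_eq (key y).2.2
    have h3 : y * e ∈ K' := h2 ▸ K'.sub_mem hy (key y).2.1
    have h5 : y * e ∈ K ⊓ K' := Submodule.mem_inf.2 ⟨(key y).1, h3⟩
    rw [hc.disjoint.eq_bot] at h5
    exact (Submodule.mem_bot R).1 h5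

private lemma summand_image {L K K' : Submodule R R} (hc : IsCompl K K') (hKL : K ≤ L)
    (hsm : ∀ X : Submodule R R, K ≤ X → L ⊔ X = ⊤ → X = ⊤) :
    ∃ e : R, e ∈ K ∧ (∀ x ∈ K, x * e = x) ∧
      Submodule.map (Ideal.jacobson (⊥ : Ideal R)).mkQ L
        = Submodule.map (Ideal.jacobson (⊥ : Ideal R)).mkQ K ∧
      IsCompl (Submodule.map (Ideal.jacobson (⊥ : Ideal R)).mkQ K)
        (Submodule.map (Ideal.jacobson (⊥ : Ideal R)).mkQ K') := by
  set J := Ideal.jacobson (⊥ : Ideal R) with hJdef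
  obtain ⟨e, e', he, he', hee, hKe, hK'e⟩ := compl_idem hc
  have hsmall : L ⊓ K' ≤ J := small_inf_compl hc hKL hsm
  have hmapbot : Submodule.map J.mkQ (K' ⊓ L) ≤ ⊥ := by
    intro x hx
    obtain ⟨yy, hy, rfl⟩ := Submodule.mem_map.1 hx
    have hyJ : yy ∈ J := hsmall (Submodule.mem_inf.2 ⟨hy.2, hy.1⟩)
    have h0 : J.mkQ yy = 0 := by
      have := (Submodule.ker_mkQ J).symm ▸ hyJ
      exact LinearMap.mem_ker.1 this
    rw [h0]; exact Submodule.zero_mem _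
  have hLdecomp : K ⊔ K' ⊓ L = L := by
    rw [← sup_inf_assoc_of_le K' hKL, hc.codisjoint.eq_top, top_inf_eq]
  have hmapeq : Submodule.map J.mkQ L = Submodule.map J.mkQ K := by
    rw [← hLdecomp, Submodule.map_sup, le_antisymm hmapbot bot_le, sup_bot_eq]
  refine ⟨e, he, hKe, hmapeq, ?_, ?_⟩
  · rw [disjoint_iff, eq_bot_iff]
    intro x hx
    obtain ⟨hx1, hx2⟩ := Submodule.mem_inf.1 hx
    obtain ⟨k, hk, hkx⟩ := Submodule.mem_map.1 hx1
    obtain ⟨k', hk', hk'x⟩ := Submodule.mem_map.1 hx2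
    have hzero : J.mkQ (k - k') = 0 := by rw [map_sub, hkx, hk'x, sub_self]
    have hsub : k - k' ∈ J := by
      have := LinearMap.mem_ker.2 hzero
      rwa [Submodule.ker_mkQ] at this
    have hke : (k - k') * e = k := by
      rw [sub_mul, hKe k hk, hK'e k' hk', sub_zero]
    have hkJ : k ∈ J := hke ▸ jac_mul_right hsub e
    have hmkzero : J.mkQ k = 0 := LinearMap.mem_ker.1 ((Submodule.ker_mkQ J).symm ▸ hkJ)
    rw [Submodule.mem_bot, ← hkx, hmkzero]
  · rw [codisjoint_iff, ← Submodule.map_sup, hc.codisjoint.eq_top, Submodule.map_top,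
      Submodule.range_mkQ]

private lemma dscb_apply (h : DualSelfCSBaer R R) (c : ℕ → R) :
    ∃ K K' : Submodule R R, IsCompl K K' ∧ K ≤ (⨆ n : ℕ, Submodule.span R {c n}) ∧
      ∀ X : Submodule R R, K ≤ X → (⨆ n : ℕ, Submodule.span R {c n}) ⊔ X = ⊤ → X = ⊤ := by
  obtain ⟨K, hK⟩ := h (ULift ℕ) fun n => LinearMap.toSpanSingleton R R (c n.down)
  have heq : (⨆ n : ULift ℕ, LinearMap.range (LinearMap.toSpanSingleton R R (c n.down)))
      = ⨆ n : ℕ, Submodule.span R {c n} := by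
    apply le_antisymm
    · refine iSup_le fun n => ?_
      rw [← LinearMap.span_singleton_eq_range]
      exact le_iSup (fun n : ℕ => Submodule.span R {c n}) n.down
    · refine iSup_le fun n => ?_
      rw [LinearMap.span_singleton_eq_range]
      exact le_iSup
        (fun n : ULift ℕ => LinearMap.range (LinearMap.toSpanSingleton R R (c n.down)))
        (ULift.up n)
  rw [heq] at hK
  obtain ⟨⟨K', hc⟩, h1, h2⟩ := hK
  exact ⟨K, K', hc, h1, h2⟩

private lemma dscb_semiperfect (h : DualSelfCSBaer R R) : IsSemiperfectRing R := by
  set J := Ideal.jacobson (⊥ : Ideal R) with hJdef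
  constructor
  · -- R/J is semisimple
    refine (isSemisimpleModule_iff ..).2 ⟨fun N => ?_⟩
    by_contra hN
    push_neg at hN
    set L : Submodule R R := Submodule.comap J.mkQ N with hLdef
    have hNL : Submodule.map J.mkQ L = N := by
      rw [hLdef, Submodule.map_comap_eq, Submodule.range_mkQ, top_inf_eq]
    have star : ∀ c : ℕ → R, (∀ n, c n ∈ L) → ∃ x ∈ L,
        J.mkQ x ∉ Submodule.map J.mkQ (⨆ n : ℕ, Submodule.span R {c n}) := by
      intro c hcL
      obtain ⟨K, K', hc2, hKE, hsm⟩ := dscb_apply h c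
      obtain ⟨e, -, -, hmapeq, hcompl⟩ := summand_image hc2 hKE hsm
      by_contra hall
      push_neg at hall
      have hEL : (⨆ n : ℕ, Submodule.span R {c n}) ≤ L :=
        iSup_le fun n => Submodule.span_le.2 (Set.singleton_subset_iff.2 (hcL n))
      have hle : N ≤ Submodule.map J.mkQ (⨆ n : ℕ, Submodule.span R {c n}) := by
        rw [← hNL]
        intro x hx
        obtain ⟨yy, hy, rfl⟩ := Submodule.mem_map.1 hx
        exact hall yy hy
      have hge : Submodule.map J.mkQ (⨆ n : ℕ, Submodule.span R {c n}) ≤ N := by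
        rw [← hNL]; exact Submodule.map_mono hEL
      have hEN : Submodule.map J.mkQ (⨆ n : ℕ, Submodule.span R {c n}) = N :=
        le_antisymm hge hle
      have hfin : IsCompl N (Submodule.map J.mkQ K') := by
        rw [← hEN, hmapeq]; exact hcompl
      exact hN _ hfin
    choose g hg1 hg2 using star
    let T : ℕ → {c : ℕ → R // ∀ n, c n ∈ L} :=
      fun k => Nat.rec ⟨fun _ => (0 : R), fun _ => L.zero_mem⟩
        (fun k p => ⟨Function.update p.1 k (g p.1 p.2), fun n => by
          rcases eq_or_ne n k with rfl | hne
          · rw [Function.update_self]; exact hg1 p.1 p.2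
          · rw [Function.update_of_ne hne]; exact p.2 n⟩) k
    set y : ℕ → R := fun k => g (T k).1 (T k).2 with hydef
    have hTsucc : ∀ k, (T (k + 1)).1 = Function.update (T k).1 k (y k) := fun k => rfl
    have hT0 : ∀ k n, k ≤ n → (T k).1 n = 0 := by
      intro k
      induction k with
      | zero => intro n _; rfl
      | succ k ih =>
        intro n hn
        rw [hTsucc k, Function.update_of_ne (by omega)]
        exact ih n (by omega)
    have hTy : ∀ k n, n < k → (T k).1 n = y n := by
      intro k
      induction k with
      | zero => intro n hn; omega
      | succ k ih =>
        intro n hn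
        rcases eq_or_ne n k with rfl | hne
        · rw [hTsucc n, Function.update_self]
        · rw [hTsucc k, Function.update_of_ne hne]; exact ih n (by omega)
    set E : ℕ → Submodule R R := fun k => ⨆ n : ℕ, Submodule.span R {(T k).1 n} with hEdef
    have hg2' : ∀ k, J.mkQ (y k) ∉ Submodule.map J.mkQ (E k) := fun k => hg2 (T k).1 (T k).2
    have hyE : ∀ k, Submodule.span R {y k} ≤ E (k + 1) := by
      intro k
      have h11 : y k = (T (k + 1)).1 k := by rw [hTy (k + 1) k (Nat.lt_succ_self k)]
      rw [h11]
      exact le_iSup (fun n => Submodule.span R {(T (k + 1)).1 n}) k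
    obtain ⟨K, K', hc2, hKE, hsm⟩ := dscb_apply h y
    obtain ⟨e, heK, hKe, hmapeq, hcompl⟩ := summand_image hc2 hKE hsm
    have hEmono : Monotone E := by
      refine monotone_nat_of_le_succ fun k => ?_
      refine iSup_le fun n => ?_
      rcases eq_or_ne n k with rfl | hne
      · rw [hT0 n n le_rfl, Submodule.span_zero_singleton]; exact bot_le
      · have h12 : (T k).1 n = (T (k + 1)).1 n := by
          rw [hTsucc k, Function.update_of_ne hne]
        rw [h12]
        exact le_iSup (fun n => Submodule.span R {(T (k + 1)).1 n}) n
    have heE : e ∈ ⨆ k : ℕ, E k := by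
      have h9 : (⨆ k : ℕ, Submodule.span R {y k}) ≤ ⨆ k : ℕ, E k :=
        iSup_le fun k => le_trans (hyE k) (le_iSup E (k + 1))
      exact h9 (hKE heK)
    obtain ⟨m, hem⟩ := (Submodule.mem_iSup_of_directed E hEmono.directed_le).1 heE
    have hKEm : K ≤ E m := by
      intro x hx
      have h13 : x = x * e := (hKe x hx).symm
      rw [h13, ← smul_eq_mul]
      exact (E m).smul_mem x hem
    have hcontr : J.mkQ (y m) ∈ Submodule.map J.mkQ (E m) := by
      have h10 : J.mkQ (y m) ∈ Submodule.map J.mkQ (⨆ k : ℕ, Submodule.span R {y k}) :=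
        Submodule.mem_map_of_mem
          (le_iSup (fun k => Submodule.span R {y k}) m (Submodule.mem_span_singleton_self (y m)))
      exact (le_trans hmapeq.le (Submodule.map_mono hKEm)) h10
    exact hg2' m hcontr
  · -- idempotents lift
    intro a ha
    obtain ⟨K, K', hc2, hKL, hsm⟩ := dscb_apply h (fun _ => a)
    rw [iSup_const] at hKL hsm
    obtain ⟨e, e', he, he', hee, hKe, hK'e⟩ := compl_idem hc2
    have hsmall := small_inf_compl hc2 hKL hsm
    obtain ⟨v, hv⟩ := Submodule.mem_span_singleton.1 (hKL he)
    have h1 : e * a - e ∈ J := by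
      have h14 : e * a - e = v • (a * a - a) := by
        rw [← hv]; simp only [smul_eq_mul]; noncomm_ring
      rw [h14]
      exact Submodule.smul_mem _ v ha
    have h2 : a - a * e ∈ J := by
      apply hsmall
      refine Submodule.mem_inf.2 ⟨?_, ?_⟩
      · exact Submodule.sub_mem _ (Submodule.mem_span_singleton_self a)
          (by rw [← smul_eq_mul]; exact Submodule.smul_mem _ a (hKL he))
      · have he'e : e' = 1 - e := by rw [← hee]; abel
        have h15 : a - a * e = a * e' := by rw [he'e, mul_sub, mul_one]
        rw [h15, ← smul_eq_mul]
        exact Submodule.smul_mem _ a he'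
    refine ⟨e + (a * e - e * (a * e)), ?_, ?_⟩
    · have hE : e * e = e := hKe e he
      show (e + (a * e - e * (a * e))) * (e + (a * e - e * (a * e)))
          = e + (a * e - e * (a * e))
      have hq1 : e * (a * e - e * (a * e)) = 0 := by
        calc e * (a * e - e * (a * e)) = e * (a * e) - (e * e) * (a * e) := by noncomm_ring
        _ = 0 := by rw [hE, sub_self]
      have hq2 : (a * e - e * (a * e)) * e = a * e - e * (a * e) := by
        calc (a * e - e * (a * e)) * e = a * (e * e) - e * (a * (e * e)) := by noncomm_ring
        _ = a * e - e * (a * e) := by rw [hE]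
      have hq3 : (a * e - e * (a * e)) * (a * e - e * (a * e)) = 0 := by
        calc (a * e - e * (a * e)) * (a * e - e * (a * e))
            = (a * e - e * (a * e)) * (a * e)
              - ((a * e - e * (a * e)) * e) * (a * e) := by noncomm_ring
        _ = 0 := by rw [hq2, sub_self]
      calc (e + (a * e - e * (a * e))) * (e + (a * e - e * (a * e)))
          = e * e + e * (a * e - e * (a * e))
            + ((a * e - e * (a * e)) * e + (a * e - e * (a * e)) * (a * e - e * (a * e))) := by
            noncomm_ring
      _ = e + (a * e - e * (a * e)) := by rw [hE, hq1, hq2, hq3, add_zero, add_zero]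
    · have hrw : e + (a * e - e * (a * e)) - a
          = -(e * a - e) + -(a - a * e) + e * (a - a * e) := by noncomm_ring
      rw [hrw]
      exact add_mem (add_mem (neg_mem h1) (neg_mem h2))
        (by rw [← smul_eq_mul]; exact Submodule.smul_mem _ e h2)

private lemma semiperfect_lifting (h : IsSemiperfectRing R) : Lifting R R := by
  obtain ⟨hss, hlift⟩ := h
  intro L
  set J := Ideal.jacobson (⊥ : Ideal R) with hJdef
  have hssc : ComplementedLattice (Submodule R (R ⧸ J)) := (isSemisimpleModule_iff ..).1 hss
  obtain ⟨C, hC⟩ := hssc.exists_isCompl (Submodule.map J.mkQ L)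
  have h1 : J.mkQ 1 ∈ Submodule.map J.mkQ L ⊔ C := by rw [hC.codisjoint.eq_top]; trivial
  obtain ⟨n, hn, c, hcC, hnc⟩ := Submodule.mem_sup.1 h1
  obtain ⟨a, haL, han⟩ := Submodule.mem_map.1 hn
  have key : ∀ x ∈ L, x - x * a ∈ J := by
    intro x hx
    have e2 : J.mkQ x - x • n ∈ C := by
      have e1 : J.mkQ x = x • n + x • c := by
        rw [← smul_add, hnc, ← map_smul, smul_eq_mul, mul_one]
      rw [e1, add_sub_cancel_left]
      exact C.smul_mem x hcC
    have e3 : J.mkQ x - x • n ∈ Submodule.map J.mkQ L :=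
      Submodule.sub_mem _ (Submodule.mem_map_of_mem hx)
        ((Submodule.map J.mkQ L).smul_mem x hn)
    have e4 : J.mkQ x - x • n = 0 := by
      have h5 := Submodule.mem_inf.2 ⟨e3, e2⟩
      rw [hC.disjoint.eq_bot] at h5
      exact (Submodule.mem_bot _).1 h5
    have e5 : J.mkQ (x - x * a) = 0 := by
      rw [map_sub, show J.mkQ (x * a) = x • J.mkQ a from by rw [← smul_eq_mul, map_smul], han]
      exact e4
    have e6 := LinearMap.mem_ker.2 e5
    rwa [Submodule.ker_mkQ] at e6
  have ha2 : a * a - a ∈ J := by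
    have h16 := neg_mem (key a haL)
    rwa [neg_sub] at h16
  obtain ⟨g, hgid, hga⟩ := hlift a ha2
  have hj : a - g ∈ J := by have h17 := neg_mem hga; rwa [neg_sub] at h17
  have hu : IsUnit (1 + (a - g)) := jac_isUnit_one_add hj
  obtain ⟨u, huv⟩ := hu
  have hga2 : g * ↑u = g * a := by
    rw [huv, mul_add, mul_one, mul_sub, hgid.eq]
    abel
  set e := (↑u⁻¹ : R) * g * ↑u with hedef
  have he_idem : e * e = e := by
    rw [hedef]
    calc ↑u⁻¹ * g * ↑u * (↑u⁻¹ * g * ↑u) = ↑u⁻¹ * g * (↑u * ↑u⁻¹) * g * ↑u := by noncomm_ring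
    _ = ↑u⁻¹ * g * ↑u := by rw [u.mul_inv, mul_one, mul_assoc (↑u⁻¹ : R) g g, hgid.eq]
  have heRa : e ∈ Submodule.span R {a} := by
    have h18 : e = (↑u⁻¹ * g) • a := by
      rw [hedef, smul_eq_mul, mul_assoc (↑u⁻¹ : R) g ↑u, hga2, ← mul_assoc]
    rw [h18]
    exact Submodule.smul_mem _ _ (Submodule.mem_span_singleton_self a)
  have heL : e ∈ L := Submodule.span_le.2 (Set.singleton_subset_iff.2 haL) heRa
  have heJ : e - a ∈ J := by
    have h5 : e - g = ↑u⁻¹ * (g * ↑u - ↑u * g) := by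
      rw [hedef]
      calc ↑u⁻¹ * g * ↑u - g = ↑u⁻¹ * (g * ↑u) - (↑u⁻¹ * ↑u) * g := by
            rw [u.inv_mul, one_mul, mul_assoc]
      _ = ↑u⁻¹ * (g * ↑u - ↑u * g) := by noncomm_ring
    have h6 : g * ↑u - ↑u * g = g * (a - g) - (a - g) * g := by
      rw [huv]; noncomm_ring
    have h7 : g * (a - g) - (a - g) * g ∈ J :=
      Submodule.sub_mem _ (by rw [← smul_eq_mul]; exact Submodule.smul_mem _ g hj)
        (jac_mul_right hj g)
    have h8 : e - g ∈ J := by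
      rw [h5, h6, ← smul_eq_mul]
      exact Submodule.smul_mem _ _ h7
    have h19 : e - a = (e - g) + (g - a) := by abel
    rw [h19]; exact Submodule.add_mem _ h8 hga
  refine ⟨Submodule.span R {e}, ⟨Submodule.span R {1 - e}, ?_⟩, ?_, ?_⟩
  · constructor
    · rw [disjoint_iff, eq_bot_iff]
      intro x hx
      obtain ⟨hx1, hx2⟩ := Submodule.mem_inf.1 hx
      obtain ⟨r, hr⟩ := Submodule.mem_span_singleton.1 hx1
      obtain ⟨s, hs⟩ := Submodule.mem_span_singleton.1 hx2
      have hxe : x * e = x := by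
        rw [← hr, smul_eq_mul, mul_assoc, he_idem]
      have hxe0 : x * e = 0 := by
        rw [← hs, smul_eq_mul, mul_assoc, sub_mul, one_mul, he_idem, sub_self, mul_zero]
      exact (Submodule.mem_bot R).2 (by rw [← hxe, hxe0])
    · rw [codisjoint_iff, eq_top_iff]
      intro x _
      rw [Submodule.mem_sup]
      refine ⟨x * e, ?_, x * (1 - e), ?_, by noncomm_ring⟩
      · rw [← smul_eq_mul]; exact Submodule.smul_mem _ x (Submodule.mem_span_singleton_self e)
      · rw [← smul_eq_mul]
        exact Submodule.smul_mem _ x (Submodule.mem_span_singleton_self (1 - e))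
  · exact Submodule.span_le.2 (Set.singleton_subset_iff.2 heL)
  · intro X hKX hLX
    by_contra hX
    obtain ⟨m, hm, hXm⟩ := Ideal.exists_le_maximal X hX
    have hJm : J ≤ m := sInf_le ⟨bot_le, hm⟩
    have hLm : L ≤ m := by
      intro x hx
      have hxa := key x hx
      have hxe : x - x * e ∈ J := by
        have h493 : x - x * e = (x - x * a) + x * (a - e) := by noncomm_ring
        rw [h493]
        refine Submodule.add_mem _ hxa ?_
        rw [← smul_eq_mul]
        refine Submodule.smul_mem _ x ?_
        have h20 := neg_mem heJ; rwa [neg_sub] at h20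
      have hxd : x = x * e + (x - x * e) := by abel
      rw [hxd]
      refine m.add_mem (hXm (hKX ?_)) (hJm hxe)
      rw [← smul_eq_mul]; exact Submodule.smul_mem _ x (Submodule.mem_span_singleton_self e)
    have htop : (⊤ : Submodule R R) ≤ m := by rw [← hLX]; exact sup_le hLm hXm
    exact hm.ne_top (top_le_iff.1 htop)

end Proofs

/-- a ring is dual self-CS-Baer as a module over itself iff it is
lifting as a module over itself, iff it is semiperfect. -/
theorem dualSelfCSBaer_iff_lifting_iff_semiperfect (R : Type*) [Ring R] :
    (DualSelfCSBaer R R ↔ Lifting R R) ∧ (Lifting R R ↔ IsSemiperfectRing R) := by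
  have h1 : Lifting R R → DualSelfCSBaer R R := fun hl ι f => hl _
  have h2 : DualSelfCSBaer R R → IsSemiperfectRing R := dscb_semiperfect
  have h3 : IsSemiperfectRing R → Lifting R R := semiperfect_lifting
  exact ⟨⟨fun h => h3 (h2 h), h1⟩, fun hl => h2 (h1 hl), h3⟩
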